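/- Let U be a 2×2 unitary complex matrix whose off-diagonal entry satisfies |U₁₂| < 1, and let θ ∈ (−π/2, π/2) with θ ≠ 0. Then both off-diagonal entries of the Reichardt iterates U_k tend to 0 as k → ∞; that is, the sequence U_k converges to a diagonal gate. -/

import Mathlib

open Complex Matrix

/-- The z-rotation `D(θ) = diag(e^{iθ/2}, e^{-iθ/2})`. -/
noncomputable def Dmat (θ : ℝ) : Matrix (Fin 2) (Fin 2) ℂ :=
  !![Complex.exp (Complex.I * θ / 2), 0; 0, Complex.exp (-(Complex.I * θ / 2))]

/-- The Reichardt iteration `U₀ = U`, `U_{k+1} = U_k D(θ) U_k⁻¹ D(θ) U_k D(θ)⁻²`. -/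
noncomputable def reichardt (θ : ℝ) (U : Matrix (Fin 2) (Fin 2) ℂ) :
    ℕ → Matrix (Fin 2) (Fin 2) ℂ
  | 0 => U
  | k + 1 =>
      reichardt θ U k * Dmat θ * (reichardt θ U k)⁻¹ * Dmat θ * reichardt θ U k *
        (Dmat θ ^ 2)⁻¹

lemma conj_exp_mul_self {z : ℂ} (h : (starRingEnd ℂ) z = -z) :
    (starRingEnd ℂ) (Complex.exp z) * Complex.exp z = 1 := by
  rw [← Complex.exp_conj, ← Complex.exp_add, h, neg_add_cancel, Complex.exp_zero]

lemma conj_Iθ2 (θ : ℝ) : (starRingEnd ℂ) (Complex.I * θ / 2) = -(Complex.I * θ / 2) := by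
  simp [map_div₀, Complex.conj_I, map_ofNat]
  ring

lemma Dmat_unitary (θ : ℝ) : (Dmat θ)ᴴ * Dmat θ = 1 := by
  ext i j
  fin_cases i <;> fin_cases j <;>
    simp [Dmat, Matrix.mul_apply, Fin.sum_univ_two, Matrix.conjTranspose_apply,
      Matrix.one_apply]
  · exact conj_exp_mul_self (conj_Iθ2 θ)
  · exact conj_exp_mul_self (by rw [map_neg, conj_Iθ2, neg_neg])

lemma Dmat_eq (θ : ℝ) : Dmat θ = !![Complex.exp (Complex.I * θ / 2), 0; 0,
    Complex.exp (-(Complex.I * θ / 2))] := rfl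

lemma xy_one (θ : ℝ) : Complex.exp (Complex.I * θ / 2) * Complex.exp (-(Complex.I * θ / 2)) = 1 := by
  rw [← Complex.exp_add, add_neg_cancel, Complex.exp_zero]

lemma Dsq_inv (θ : ℝ) : (Dmat θ ^ 2)⁻¹ =
    !![Complex.exp (-(Complex.I * θ / 2)) ^ 2, 0; 0, Complex.exp (Complex.I * θ / 2) ^ 2] := by
  apply Matrix.inv_eq_right_inv
  rw [pow_two, Dmat_eq]
  ext i j
  fin_cases i <;> fin_cases j <;>
    simp [Matrix.mul_apply, Fin.sum_univ_two, Matrix.one_apply, pow_two,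
      ← Complex.exp_add] <;>
    · convert Complex.exp_zero using 2
      ring

lemma key_entry (θ : ℝ) (W : Matrix (Fin 2) (Fin 2) ℂ) (hW : Wᴴ * W = 1) :
    (W * Dmat θ * W⁻¹ * Dmat θ * W * (Dmat θ ^ 2)⁻¹) 0 1 =
      W 0 1 * Complex.exp (Complex.I * θ / 2) ^ 2 *
        ((1 - W 0 1 * (starRingEnd ℂ) (W 0 1)) *
          (Complex.exp (Complex.I * θ / 2) ^ 2 + Complex.exp (-(Complex.I * θ / 2)) ^ 2 - 1) +
          W 0 1 * (starRingEnd ℂ) (W 0 1)) := by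
  have hW' : W * Wᴴ = 1 := mul_eq_one_comm.mp hW
  have hinv : W⁻¹ = Wᴴ := Matrix.inv_eq_left_inv hW
  have h1 := congrFun (congrFun hW' 0) 0
  have h2 := congrFun (congrFun hW' 0) 1
  have h3 := congrFun (congrFun hW' 1) 1
  have h4 := congrFun (congrFun hW 0) 0
  simp [Matrix.mul_apply, Fin.sum_univ_two, Matrix.conjTranspose_apply,
    Matrix.one_apply] at h1 h2 h3 h4
  have hxy := xy_one θ
  rw [hinv, Dsq_inv, Dmat_eq]
  simp [Matrix.mul_apply, Fin.sum_univ_two, Matrix.conjTranspose_apply]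
  set x := Complex.exp (Complex.I * θ / 2)
  set y := Complex.exp (-(Complex.I * θ / 2))
  set a := W 0 0; set b := W 0 1; set c := W 1 0; set d := W 1 1
  linear_combination (b*(x^4 - x^2 + 1)) * h1 + (x^2*d) * h2 + (b - b*x^2) * h3 +
    (b*x^2 - b) * h4 +
    (b^2*((starRingEnd ℂ) b)*x^2 + a*((starRingEnd ℂ) c)*d*x^2 +
      (b*((starRingEnd ℂ) d)*d - b + b^2*((starRingEnd ℂ) b))*(x*y+1)) * hxy

lemma exp_sum_cos (θ : ℝ) :
    Complex.exp (Complex.I * θ) + Complex.exp (-(Complex.I * θ)) = ((2 * Real.cos θ : ℝ) : ℂ) := by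
  rw [show Complex.I * θ = (θ : ℂ) * Complex.I by ring,
    show -((θ : ℂ) * Complex.I) = (-θ : ℂ) * Complex.I by ring,
    Complex.exp_mul_I, Complex.exp_mul_I]
  rw [Complex.cos_neg, Complex.sin_neg]
  push_cast
  ring

lemma key_abs (θ : ℝ) (W : Matrix (Fin 2) (Fin 2) ℂ) (hW : Wᴴ * W = 1) :
    ‖(W * Dmat θ * W⁻¹ * Dmat θ * W * (Dmat θ ^ 2)⁻¹) 0 1‖ =
      ‖W 0 1‖ *
        |(1 - ‖W 0 1‖ ^ 2) * (2 * Real.cos θ - 1) + ‖W 0 1‖ ^ 2| := by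
  have hx2 : Complex.exp (Complex.I * θ / 2) ^ 2 = Complex.exp (Complex.I * θ) := by
    rw [sq, ← Complex.exp_add]; congr 1; ring
  have hy2 : Complex.exp (-(Complex.I * θ / 2)) ^ 2 = Complex.exp (-(Complex.I * θ)) := by
    rw [sq, ← Complex.exp_add]; congr 1; ring
  have hb : W 0 1 * (starRingEnd ℂ) (W 0 1) = ((‖W 0 1‖ ^ 2 : ℝ) : ℂ) := by
    rw [Complex.mul_conj, Complex.sq_norm]
  rw [key_entry θ W hW, hx2, hy2, hb]
  rw [show (1 - ((‖W 0 1‖ ^ 2 : ℝ) : ℂ)) *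
        (Complex.exp (Complex.I * θ) + Complex.exp (-(Complex.I * θ)) - 1) +
        ((‖W 0 1‖ ^ 2 : ℝ) : ℂ) =
      (((1 - ‖W 0 1‖ ^ 2) * (2 * Real.cos θ - 1) + ‖W 0 1‖ ^ 2 : ℝ) : ℂ) by
    rw [show Complex.exp (Complex.I * θ) + Complex.exp (-(Complex.I * θ)) - 1 =
        ((2 * Real.cos θ : ℝ) : ℂ) - 1 by rw [exp_sum_cos]
      ]
    push_cast
    ring]
  rw [norm_mul, norm_mul, Complex.norm_exp, Complex.norm_real]
  norm_num [Complex.mul_re]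

lemma mul_unit {A B : Matrix (Fin 2) (Fin 2) ℂ} (hA : Aᴴ * A = 1) (hB : Bᴴ * B = 1) :
    (A * B)ᴴ * (A * B) = 1 := by
  rw [Matrix.conjTranspose_mul, show Bᴴ * Aᴴ * (A * B) = Bᴴ * (Aᴴ * A) * B by
    simp [Matrix.mul_assoc], hA, Matrix.mul_one, hB]

lemma step_unitary (θ : ℝ) {W : Matrix (Fin 2) (Fin 2) ℂ} (hW : Wᴴ * W = 1) :
    (W * Dmat θ * W⁻¹ * Dmat θ * W * (Dmat θ ^ 2)⁻¹)ᴴ *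
      (W * Dmat θ * W⁻¹ * Dmat θ * W * (Dmat θ ^ 2)⁻¹) = 1 := by
  have hD := Dmat_unitary θ
  have hD2 : (Dmat θ ^ 2)ᴴ * Dmat θ ^ 2 = 1 := by
    rw [pow_two]; exact mul_unit hD hD
  have hD2inv : ((Dmat θ ^ 2)⁻¹)ᴴ * (Dmat θ ^ 2)⁻¹ = 1 := by
    rw [Matrix.inv_eq_left_inv hD2, Matrix.conjTranspose_conjTranspose]
    exact mul_eq_one_comm.mp hD2
  have hWH : (Wᴴ)ᴴ * Wᴴ = 1 := by
    rw [Matrix.conjTranspose_conjTranspose]; exact mul_eq_one_comm.mp hW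
  rw [Matrix.inv_eq_left_inv hW]
  exact mul_unit (mul_unit (mul_unit (mul_unit (mul_unit hW hD) hWH) hD) hW) hD2inv

lemma abs_offdiag {W : Matrix (Fin 2) (Fin 2) ℂ} (hW : Wᴴ * W = 1) :
    ‖W 1 0‖ = ‖W 0 1‖ := by
  have hW' : W * Wᴴ = 1 := mul_eq_one_comm.mp hW
  have h1 := congrFun (congrFun hW' 0) 0
  have h4 := congrFun (congrFun hW 0) 0
  simp [Matrix.mul_apply, Fin.sum_univ_two, Matrix.conjTranspose_apply,
    Matrix.one_apply] at h1 h4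
  have key : ((Complex.normSq (W 1 0) : ℝ) : ℂ) = ((Complex.normSq (W 0 1) : ℝ) : ℂ) := by
    rw [← Complex.mul_conj, ← Complex.mul_conj]
    linear_combination h4 - h1
  have := Complex.ofReal_injective key
  rw [Complex.norm_def, Complex.norm_def, this]

/-- For a `2×2` unitary `U` with `|U₁₂| < 1` and `θ ∈ (-π/2, π/2)`, `θ ≠ 0`, both
off-diagonal entries of the Reichardt iterates converge to `0`: the sequence converges to a
diagonal gate. -/
theorem reichardt_tendsto_diagonal (θ : ℝ)
    (hθ : θ ∈ Set.Ioo (-(Real.pi / 2)) (Real.pi / 2)) (hθ0 : θ ≠ 0)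
    (U : Matrix (Fin 2) (Fin 2) ℂ) (hU : Uᴴ * U = 1)
    (hoff : ‖U 0 1‖ < 1) :
    Filter.Tendsto (fun k => reichardt θ U k 0 1) Filter.atTop (nhds 0) ∧
    Filter.Tendsto (fun k => reichardt θ U k 1 0) Filter.atTop (nhds 0) := by
  have hpi := Real.pi_pos
  obtain ⟨hθl, hθr⟩ := hθ
  set c := Real.cos θ with hc
  have hc0 : 0 < c := Real.cos_pos_of_mem_Ioo ⟨hθl, hθr⟩
  have hc1 : c < 1 := by
    rcases lt_or_eq_of_le (Real.cos_le_one θ) with h | h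
    · exact h
    · exact absurd ((Real.cos_eq_one_iff_of_lt_of_lt (by linarith) (by linarith)).mp h) hθ0
  set t₀ := ‖U 0 1‖ ^ 2 with ht₀
  have habs0 : (0:ℝ) ≤ ‖U 0 1‖ := norm_nonneg _
  have ht0le : t₀ < 1 := by
    rw [ht₀]; nlinarith
  have ht0nn : 0 ≤ t₀ := by positivity
  set r := max |2 * c - 1| |(1 - t₀) * (2 * c - 1) + t₀| with hr
  have hr0 : 0 ≤ r := le_trans (abs_nonneg _) (le_max_left _ _)
  have hr1 : r < 1 := by
    rw [hr]
    apply max_lt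
    · rw [abs_lt]; constructor <;> linarith
    · rw [abs_lt]; constructor <;> nlinarith
  -- pointwise contraction bound
  have hcontr : ∀ t : ℝ, 0 ≤ t → t ≤ t₀ → |(1 - t) * (2 * c - 1) + t| ≤ r := by
    intro t ht0 htle
    have hv1 : 2 * c - 1 ≤ (1 - t) * (2 * c - 1) + t := by nlinarith
    have hv2 : (1 - t) * (2 * c - 1) + t ≤ (1 - t₀) * (2 * c - 1) + t₀ := by nlinarith
    rw [abs_le]
    constructor
    · calc -r ≤ -|2 * c - 1| := neg_le_neg (le_max_left _ _)
        _ ≤ 2 * c - 1 := neg_abs_le _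
        _ ≤ _ := hv1
    · calc (1 - t) * (2 * c - 1) + t ≤ (1 - t₀) * (2 * c - 1) + t₀ := hv2
        _ ≤ |(1 - t₀) * (2 * c - 1) + t₀| := le_abs_self _
        _ ≤ r := le_max_right _ _
  -- main induction
  have main : ∀ k, (reichardt θ U k)ᴴ * reichardt θ U k = 1 ∧
      ‖reichardt θ U k 0 1‖ ≤ ‖U 0 1‖ * r ^ k := by
    intro k
    induction k with
    | zero => exact ⟨hU, by simp [reichardt]⟩
    | succ k ih =>
      obtain ⟨hunit, hbd⟩ := ih
      have hrk1 : r ^ k ≤ 1 := pow_le_one₀ hr0 hr1.le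
      have hble : ‖reichardt θ U k 0 1‖ ≤ ‖U 0 1‖ := by
        calc ‖reichardt θ U k 0 1‖ ≤ ‖U 0 1‖ * r ^ k := hbd
          _ ≤ ‖U 0 1‖ * 1 := by
              exact mul_le_mul_of_nonneg_left hrk1 habs0
          _ = _ := mul_one _
      have htk : ‖reichardt θ U k 0 1‖ ^ 2 ≤ t₀ := by
        rw [ht₀]
        exact pow_le_pow_left₀ (norm_nonneg _) hble 2
      constructor
      · exact step_unitary θ hunit
      · have heq := key_abs θ (reichardt θ U k) hunit
        have : reichardt θ U (k + 1) = reichardt θ U k * Dmat θ * (reichardt θ U k)⁻¹ *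
            Dmat θ * reichardt θ U k * (Dmat θ ^ 2)⁻¹ := rfl
        rw [this, heq]
        calc ‖reichardt θ U k 0 1‖ *
              |(1 - ‖reichardt θ U k 0 1‖ ^ 2) * (2 * c - 1) +
                ‖reichardt θ U k 0 1‖ ^ 2|
            ≤ (‖U 0 1‖ * r ^ k) * r := by
              apply mul_le_mul hbd
                (hcontr _ (by positivity) htk) (abs_nonneg _) (by positivity)
          _ = ‖U 0 1‖ * r ^ (k + 1) := by ring
  have htendr : Filter.Tendsto (fun k => ‖U 0 1‖ * r ^ k) Filter.atTop (nhds 0) := by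
    have := tendsto_pow_atTop_nhds_zero_of_lt_one hr0 hr1
    simpa using this.const_mul (‖U 0 1‖)
  constructor
  · rw [tendsto_zero_iff_norm_tendsto_zero]
    exact squeeze_zero (fun k => norm_nonneg _) (fun k => (main k).2) htendr
  · rw [tendsto_zero_iff_norm_tendsto_zero]
    refine squeeze_zero (fun k => norm_nonneg _) (fun k => ?_) htendr
    calc ‖reichardt θ U k 1 0‖ = ‖reichardt θ U k 1 0‖ := rfl
      _ = ‖reichardt θ U k 0 1‖ := abs_offdiag (main k).1
      _ ≤ _ := (main k).2
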